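/- For a ≥ 1 and m ≥ 1, let Q be the 2×2 matrix m·[[2,a],[a,−2]], and let M = [[a_{2n−1}, a_{2n}],[a_{2n}, a_{2n+1}]] where n is a positive integer. Then (M − I)·Q^{−1} has all entries in ℤ if and only if n is even and m divides a_n. -/

import Mathlib

lemma ratdvd_aux (x d : ℤ) (hd : d ≠ 0) :
    (∃ z : ℤ, (x : ℚ) / (d : ℚ) = z) ↔ d ∣ x := by
  have hd' : (d:ℚ) ≠ 0 := Int.cast_ne_zero.mpr hd
  constructor
  · rintro ⟨z, hz⟩
    refine ⟨z, ?_⟩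
    field_simp at hz
    exact_mod_cast hz
  · rintro ⟨c, rfl⟩
    exact ⟨c, by push_cast; field_simp⟩

lemma cassini_aux (a : ℤ) (f : ℕ → ℤ) (h0 : f 0 = 0) (h1 : f 1 = 1)
    (hrec : ∀ n, f (n+2) = a * f (n+1) + f n) :
    ∀ n, f (n+1)^2 - a * f (n+1) * f n - f n^2 = (-1)^n := by
  intro n
  induction n with
  | zero => simp [h0, h1]
  | succ k ih =>
    rw [hrec k]
    linear_combination (-1 : ℤ) * ih

lemma double_aux (a : ℤ) (f : ℕ → ℤ) (h0 : f 0 = 0) (h1 : f 1 = 1)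
    (hrec : ∀ n, f (n+2) = a * f (n+1) + f n) :
    ∀ k, f (2*k+1) = f k^2 + f (k+1)^2 ∧ f (2*k+2) = f (k+1) * (f (k+2) + f k) := by
  have hidx : ∀ {i j : ℕ}, i = j → f i = f j := fun h => by rw [h]
  intro k
  induction k with
  | zero =>
    constructor
    · norm_num [h0, h1]
    · norm_num [h0, h1, hrec 0]
  | succ k ih =>
    obtain ⟨ih1, ih2⟩ := ih
    constructor
    · rw [hidx (show 2*(k+1)+1 = (2*k+1)+2 by ring), hrec (2*k+1), ih1,
        hidx (show 2*k+1+1 = 2*k+2 by ring), ih2, hrec k]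
      ring
    · rw [hidx (show 2*(k+1)+2 = (2*k+2)+2 by ring), hrec (2*k+2),
        hidx (show 2*k+2+1 = (2*k+1)+2 by ring), hrec (2*k+1), ih1,
        hidx (show 2*k+1+1 = 2*k+2 by ring), ih2, hrec (k+1), hrec k]
      ring

theorem integrality_criterion_symplectic (a m : ℤ) (ha : 1 ≤ a) (hm : 1 ≤ m)
    (f : ℕ → ℤ) (h0 : f 0 = 0) (h1 : f 1 = 1)
    (hrec : ∀ n, f (n + 2) = a * f (n + 1) + f n) (n : ℕ) (hn : 0 < n) :
    (∀ i j : Fin 2,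
        ∃ z : ℤ,
          (((!![(f (2 * n - 1) : ℚ), (f (2 * n) : ℚ);
                (f (2 * n) : ℚ), (f (2 * n + 1) : ℚ)] - 1) *
              ((m : ℚ) • !![2, (a : ℚ); (a : ℚ), -2])⁻¹) i j) = (z : ℚ)) ↔
      (Even n ∧ m ∣ f n) := by
  obtain ⟨k, rfl⟩ : ∃ k, n = k + 1 := ⟨n - 1, by omega⟩
  have hm0 : (m:ℚ) ≠ 0 := by
    have : (0:ℚ) < m := by exact_mod_cast lt_of_lt_of_le one_pos hm
    linarith
  have ha4 : ((a:ℚ)^2+4) ≠ 0 := by positivity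
  have ha4' : ((a:ℤ)^2+4) ≠ 0 := by positivity
  have hD : (m*(a^2+4) : ℤ) ≠ 0 := by
    have : (0:ℤ) < m*(a^2+4) := by nlinarith [sq_nonneg a]
    omega
  have hinv : ((m:ℚ) • !![2, (a:ℚ); (a:ℚ), -2])⁻¹
      = ((m:ℚ)*((a:ℚ)^2+4))⁻¹ • !![2, (a:ℚ); (a:ℚ), -2] := by
    apply Matrix.inv_eq_right_inv
    ext i j
    fin_cases i <;> fin_cases j <;>
      simp [Matrix.mul_apply, Fin.sum_univ_two, Matrix.one_apply] <;>
      field_simp <;> ring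
  have hidx : ∀ {i j : ℕ}, i = j → f i = f j := fun h => by rw [h]
  obtain ⟨hd1, hd2⟩ := double_aux a f h0 h1 hrec k
  have hd3 := (double_aux a f h0 h1 hrec (k+1)).1
  have hv1 : f (2*(k+1) - 1) = (f (k+2) - a * f (k+1))^2 + f (k+1)^2 := by
    rw [hidx (show 2*(k+1)-1 = 2*k+1 by omega), hd1, hrec k]; ring
  have hv2 : f (2*(k+1)) = f (k+1) * (f (k+2) + (f (k+2) - a * f (k+1))) := by
    rw [hidx (show 2*(k+1) = 2*k+2 by ring), hd2, hrec k]; ring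
  have hv3 : f (2*(k+1)+1) = f (k+1)^2 + f (k+2)^2 := by
    rw [hd3, hidx (show k+1+1 = k+2 by omega)]
  have hcas := cassini_aux a f h0 h1 hrec (k+1)
  rw [hidx (show k+1+1 = k+2 by omega)] at hcas
  have hcasQ : ((f (k+2):ℚ))^2 - (a:ℚ) * (f (k+2):ℚ) * (f (k+1):ℚ) - (f (k+1):ℚ)^2
      = (-1:ℚ)^(k+1) := by exact_mod_cast hcas
  -- the four entry computations
  have hE : ∀ (i j : Fin 2) (N : ℤ),
      ((((!![(f (2 * (k+1) - 1) : ℚ), (f (2 * (k+1)) : ℚ);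
                (f (2 * (k+1)) : ℚ), (f (2 * (k+1) + 1) : ℚ)] - 1) *
              ((m : ℚ) • !![2, (a : ℚ); (a : ℚ), -2])⁻¹) i j) = ((N:ℚ) / ((m*(a^2+4) : ℤ) : ℚ))) →
      ((∃ z : ℤ,
          (((!![(f (2 * (k+1) - 1) : ℚ), (f (2 * (k+1)) : ℚ);
                (f (2 * (k+1)) : ℚ), (f (2 * (k+1) + 1) : ℚ)] - 1) *
              ((m : ℚ) • !![2, (a : ℚ); (a : ℚ), -2])⁻¹) i j) = (z : ℚ)) ↔
        (m*(a^2+4) : ℤ) ∣ N) := by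
    intro i j N hval
    rw [hval]
    exact ratdvd_aux _ _ hD
  have c00 := hE 0 0 ((a^2+4) * f (k+1)^2 + 2*((-1:ℤ)^(k+1)-1)) (by
    rw [hinv]
    simp only [Matrix.mul_apply, Fin.sum_univ_two, Matrix.sub_apply, Matrix.one_apply,
      Matrix.smul_apply, Matrix.cons_val', Matrix.cons_val_zero, Matrix.cons_val_one,
      Matrix.head_cons, Matrix.empty_val', Matrix.cons_val_fin_one, smul_eq_mul]
    norm_num
    push_cast [hv1, hv2, hv3]
    field_simp
    linear_combination (2:ℚ) * hcasQ)
  have c01 := hE 0 1 ((a^2+4) * (f (k+1) * (a * f (k+1) - f (k+2))) + a*((-1:ℤ)^(k+1)-1)) (by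
    rw [hinv]
    simp only [Matrix.mul_apply, Fin.sum_univ_two, Matrix.sub_apply, Matrix.one_apply,
      Matrix.smul_apply, Matrix.cons_val', Matrix.cons_val_zero, Matrix.cons_val_one,
      Matrix.head_cons, Matrix.empty_val', Matrix.cons_val_fin_one, smul_eq_mul]
    norm_num
    push_cast [hv1, hv2, hv3]
    field_simp
    linear_combination (a:ℚ) * hcasQ)
  have c10 := hE 1 0 ((a^2+4) * (f (k+1) * f (k+2)) + a*((-1:ℤ)^(k+1)-1)) (by
    rw [hinv]
    simp only [Matrix.mul_apply, Fin.sum_univ_two, Matrix.sub_apply, Matrix.one_apply,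
      Matrix.smul_apply, Matrix.cons_val', Matrix.cons_val_zero, Matrix.cons_val_one,
      Matrix.head_cons, Matrix.empty_val', Matrix.cons_val_fin_one, smul_eq_mul]
    norm_num
    push_cast [hv1, hv2, hv3]
    field_simp
    linear_combination (a:ℚ) * hcasQ)
  have c11 := hE 1 1 (-((a^2+4) * f (k+1)^2 + 2*((-1:ℤ)^(k+1)-1))) (by
    rw [hinv]
    simp only [Matrix.mul_apply, Fin.sum_univ_two, Matrix.sub_apply, Matrix.one_apply,
      Matrix.smul_apply, Matrix.cons_val', Matrix.cons_val_zero, Matrix.cons_val_one,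
      Matrix.head_cons, Matrix.empty_val', Matrix.cons_val_fin_one, smul_eq_mul]
    norm_num
    push_cast [hv1, hv2, hv3]
    field_simp
    linear_combination (-2:ℚ) * hcasQ)
  have key : ∀ x : ℤ, ((m*(a^2+4) : ℤ) ∣ (a^2+4)*x) ↔ m ∣ x := fun x => by
    rw [mul_comm m, mul_dvd_mul_iff_left ha4']
  rcases Nat.even_or_odd (k+1) with he | ho
  · have hε : ((-1:ℤ))^(k+1) = 1 := Even.neg_one_pow he
    constructor
    · intro h
      refine ⟨he, ?_⟩
      have h00 : m ∣ f (k+1) * f (k+1) := (key _).mp (by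
        rw [show ((a:ℤ)^2+4) * (f (k+1) * f (k+1))
            = (a^2+4) * f (k+1)^2 + 2*((-1:ℤ)^(k+1)-1) by rw [hε]; ring]
        exact c00.mp (h 0 0))
      have h10 : m ∣ f (k+1) * f (k+2) := (key _).mp (by
        rw [show ((a:ℤ)^2+4) * (f (k+1) * f (k+2))
            = (a^2+4) * (f (k+1) * f (k+2)) + a*((-1:ℤ)^(k+1)-1) by rw [hε]; ring]
        exact c10.mp (h 1 0))
      have hrepr : f (k+1) = f (k+2) * (f (k+1) * f (k+2))
          + (-(a * f (k+2)) - f (k+1)) * (f (k+1) * f (k+1)) := by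
        have hcas1 : f (k+2)^2 - a * f (k+2) * f (k+1) - f (k+1)^2 = 1 := by
          rw [hcas, hε]
        linear_combination (-(f (k+1))) * hcas1
      rw [hrepr]
      exact dvd_add (Dvd.dvd.mul_left h10 _) (Dvd.dvd.mul_left h00 _)
    · rintro ⟨-, hmp⟩
      obtain ⟨c, hc⟩ := hmp
      intro i j
      fin_cases i <;> fin_cases j
      · exact c00.mpr ⟨m*c^2, by rw [hε, hc]; ring⟩
      · exact c01.mpr ⟨c*(a*(m*c) - f (k+2)), by rw [hε, hc]; ring⟩
      · exact c10.mpr ⟨c*f (k+2), by rw [hε, hc]; ring⟩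
      · exact c11.mpr ⟨-(m*c^2), by rw [hε, hc]; ring⟩
  · have hε : ((-1:ℤ))^(k+1) = -1 := Odd.neg_one_pow ho
    constructor
    · intro h
      exfalso
      have h00 := c00.mp (h 0 0)
      have hd' : ((a:ℤ)^2+4) ∣ (a^2+4) * f (k+1)^2 + 2*((-1:ℤ)^(k+1)-1) :=
        dvd_trans (dvd_mul_left _ m) h00
      have h4 : ((a:ℤ)^2+4) ∣ (4:ℤ) := by
        have hsub := dvd_sub (dvd_mul_right ((a:ℤ)^2+4) (f (k+1)^2)) hd'
        rw [show ((a:ℤ)^2+4) * f (k+1)^2 - ((a^2+4) * f (k+1)^2 + 2*((-1:ℤ)^(k+1)-1))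
            = (4:ℤ) by rw [hε]; ring] at hsub
        exact hsub
      have hle : ((a:ℤ)^2+4) ≤ 4 := Int.le_of_dvd (by norm_num) h4
      nlinarith
    · rintro ⟨he, -⟩
      exact absurd he (Nat.not_even_iff_odd.mpr ho)
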